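/- Let V, K ∈ ℕ with 1 ≤ K ≤ V, let h_m, h_v ∈ ℝ^d with ‖h_m‖, ‖h_v‖ ≤ c_h, and let w_1, …, w_V ∈ ℝ^d with ‖w_r‖ ≤ c_w for all r. Set c = √2 c_w c_h and let i* = argmax_r ⟨w_r, h_v⟩ (assumed unique). Let S_v be a set of K indices containing the K largest values of r ↦ ⟨w_r, h_v⟩, and let K* ∈ S_v be an index attaining the K-th largest value, with Δ := ⟨w_{i*}, h_v⟩ − ⟨w_{K*}, h_v⟩. If ⟨h_m, h_v⟩ ≥ c_h² δ and δ > 1 − (Δ/(2c))², then for every index j ∉ S_v we have ⟨w_{i*}, h_m⟩ ≥ ⟨w_j, h_m⟩; consequently at most K − 1 indices j satisfy ⟨w_j, h_m⟩ > ⟨w_{i*}, h_m⟩, so i* lies in every top-K set of the mask-token logits r ↦ ⟨w_r, h_m⟩. -/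

import Mathlib

set_option maxHeartbeats 1000000


open scoped RealInnerProductSpace

theorem stmt_4 (d V K : ℕ) (hK1 : 1 ≤ K) (hKV : K ≤ V)
    (h_m h_v : EuclideanSpace ℝ (Fin d)) (w : Fin V → EuclideanSpace ℝ (Fin d))
    (c_h c_w δ c Δ : ℝ)
    (hm : ‖h_m‖ ≤ c_h) (hv : ‖h_v‖ ≤ c_h) (hw : ∀ r, ‖w r‖ ≤ c_w)
    (hc : c = Real.sqrt 2 * c_w * c_h)
    (istar : Fin V) (hargmax : ∀ r, r ≠ istar → ⟪w r, h_v⟫ < ⟪w istar, h_v⟫)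
    (Sv : Finset (Fin V)) (hScard : Sv.card = K)
    (hStop : ∀ s ∈ Sv, ∀ j ∉ Sv, ⟪w j, h_v⟫ ≤ ⟪w s, h_v⟫)
    (histar : istar ∈ Sv)
    (Kstar : Fin V) (hKstar : Kstar ∈ Sv)
    (hKmin : ∀ s ∈ Sv, ⟪w Kstar, h_v⟫ ≤ ⟪w s, h_v⟫)
    (hΔ : Δ = ⟪w istar, h_v⟫ - ⟪w Kstar, h_v⟫)
    (hcos : ⟪h_m, h_v⟫ ≥ c_h ^ 2 * δ)
    (hδ : δ > 1 - (Δ / (2 * c)) ^ 2) :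
    (∀ j ∉ Sv, ⟪w j, h_m⟫ ≤ ⟪w istar, h_m⟫) ∧
    (Finset.univ.filter fun j => ⟪w istar, h_m⟫ < ⟪w j, h_m⟫).card ≤ K - 1 ∧
    (∀ T : Finset (Fin V), T.card = K →
      (∀ t ∈ T, ∀ j ∉ T, ⟪w j, h_m⟫ ≤ ⟪w t, h_m⟫) → istar ∈ T) := by
  have hch0 : 0 ≤ c_h := le_trans (norm_nonneg _) hm
  have hcw0 : 0 ≤ c_w := le_trans (norm_nonneg _) (hw istar)
  have hΔ0 : 0 ≤ Δ := by rw [hΔ]; linarith [hKmin istar histar]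
  -- the key strict inequality
  have L : ∀ j ∉ Sv, ⟪w j, h_m⟫ < ⟪w istar, h_m⟫ := by
    by_cases hδ1 : δ ≤ 1
    · -- nondegenerate case
      have h1δ : 1 - δ < (Δ / (2 * c)) ^ 2 := by linarith
      have hsq : 0 < (Δ / (2 * c)) ^ 2 := lt_of_le_of_lt (by linarith) h1δ
      have hcne : c ≠ 0 := by
        rintro rfl
        simp at hsq
      have hc0 : 0 < c := lt_of_le_of_ne
        (by rw [hc]; positivity) (Ne.symm hcne)
      have hcw : 0 < c_w := by
        rcases eq_or_lt_of_le hcw0 with h | h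
        · exfalso; apply hcne; rw [hc, ← h]; ring
        · exact h
      have hch : 0 < c_h := by
        rcases eq_or_lt_of_le hch0 with h | h
        · exfalso; apply hcne; rw [hc, ← h]; ring
        · exact h
      have hΔpos : 0 < Δ := by
        rcases eq_or_lt_of_le hΔ0 with h | h
        · exfalso; rw [← h] at hsq; simp at hsq
        · exact h
      have hc2 : c ^ 2 = 2 * c_w ^ 2 * c_h ^ 2 := by
        have h2 : Real.sqrt 2 ^ 2 = 2 := Real.sq_sqrt (by norm_num)
        rw [hc]; nlinarith [h2]
      intro j hj
      have hjK : ⟪w j, h_v⟫ ≤ ⟪w Kstar, h_v⟫ := hStop Kstar hKstar j hj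
      have e1 : ⟪w istar, h_m⟫ - ⟪w j, h_m⟫ =
          (⟪w istar, h_v⟫ - ⟪w j, h_v⟫) + ⟪w istar - w j, h_m - h_v⟫ := by
        simp only [inner_sub_left, inner_sub_right]; ring
      have A3 : |⟪w istar - w j, h_m - h_v⟫| ≤ ‖w istar - w j‖ * ‖h_m - h_v‖ :=
        abs_real_inner_le_norm _ _
      have A3' : -(‖w istar - w j‖ * ‖h_m - h_v‖) ≤ ⟪w istar - w j, h_m - h_v⟫ := by
        have := neg_abs_le (⟪w istar - w j, h_m - h_v⟫); linarith
      have A4 : ‖w istar - w j‖ ≤ 2 * c_w :=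
        (norm_sub_le _ _).trans (by linarith [hw istar, hw j])
      have A5 : ‖h_m - h_v‖ ^ 2 ≤ 2 * c_h ^ 2 * (1 - δ) := by
        have hns : ‖h_m - h_v‖ ^ 2 = ‖h_m‖ ^ 2 - 2 * ⟪h_m, h_v⟫ + ‖h_v‖ ^ 2 :=
          norm_sub_sq_real h_m h_v
        have hm2 : ‖h_m‖ ^ 2 ≤ c_h ^ 2 := by nlinarith [norm_nonneg h_m]
        have hv2 : ‖h_v‖ ^ 2 ≤ c_h ^ 2 := by nlinarith [norm_nonneg h_v]
        nlinarith
      have h1δ' : 1 - δ < Δ ^ 2 / (4 * c ^ 2) := by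
        have : (Δ / (2 * c)) ^ 2 = Δ ^ 2 / (4 * c ^ 2) := by
          rw [div_pow]; ring_nf
        linarith [this ▸ h1δ]
      have hN2 : ‖h_m - h_v‖ ^ 2 < Δ ^ 2 / (4 * c_w ^ 2) := by
        have : 2 * c_h ^ 2 * (1 - δ) < 2 * c_h ^ 2 * (Δ ^ 2 / (4 * c ^ 2)) := by
          apply mul_lt_mul_of_pos_left h1δ' (by positivity)
        have heq : 2 * c_h ^ 2 * (Δ ^ 2 / (4 * c ^ 2)) = Δ ^ 2 / (4 * c_w ^ 2) := by
          rw [hc2]; field_simp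
        linarith
      have hNlt : 2 * c_w * ‖h_m - h_v‖ < Δ := by
        have h4 : (0:ℝ) < 4 * c_w ^ 2 := by positivity
        have h' : ‖h_m - h_v‖ ^ 2 * (4 * c_w ^ 2) < Δ ^ 2 := (lt_div_iff₀ h4).mp hN2
        nlinarith [h', hΔpos, mul_nonneg (mul_nonneg (by norm_num : (0:ℝ) ≤ 2) hcw0)
          (norm_nonneg (h_m - h_v))]
      have hinner : -(2 * c_w * ‖h_m - h_v‖) ≤ ⟪w istar - w j, h_m - h_v⟫ := by
        have hmul : ‖w istar - w j‖ * ‖h_m - h_v‖ ≤ 2 * c_w * ‖h_m - h_v‖ :=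
          mul_le_mul_of_nonneg_right A4 (norm_nonneg _)
        linarith
      have hΔle : Δ ≤ ⟪w istar, h_v⟫ - ⟪w j, h_v⟫ := by rw [hΔ]; linarith
      linarith [e1, hinner, hNlt, hΔle]
    · -- degenerate case: δ > 1 forces c_h = 0, h_v = 0
      push_neg at hδ1
      have hCS : ⟪h_m, h_v⟫ ≤ ‖h_m‖ * ‖h_v‖ := real_inner_le_norm _ _
      have hhm : ‖h_m‖ * ‖h_v‖ ≤ c_h * c_h :=
        mul_le_mul hm hv (norm_nonneg _) hch0
      have h2 : c_h ^ 2 ≤ 0 := by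
        by_contra h
        push_neg at h
        nlinarith [mul_pos h (by linarith : (0:ℝ) < δ - 1)]
      have hch : c_h = 0 := sq_eq_zero_iff.mp (le_antisymm h2 (sq_nonneg _))
      have hv0 : h_v = 0 := by
        have hle : ‖h_v‖ ≤ 0 := hch ▸ hv
        exact norm_eq_zero.mp (le_antisymm hle (norm_nonneg _))
      intro j hj
      exfalso
      have hji : j ≠ istar := fun h => hj (h ▸ histar)
      have := hargmax j hji
      rw [hv0] at this
      simp at this
  refine ⟨fun j hj => (L j hj).le, ?_, ?_⟩
  · have hsub : (Finset.univ.filter fun j => ⟪w istar, h_m⟫ < ⟪w j, h_m⟫) ⊆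
        Sv.erase istar := by
      intro j hjf
      simp only [Finset.mem_filter] at hjf
      obtain ⟨_, hlt⟩ := hjf
      by_cases hjS : j ∈ Sv
      · refine Finset.mem_erase.2 ⟨?_, hjS⟩
        rintro rfl; exact lt_irrefl _ hlt
      · exact absurd hlt (not_lt.2 (L j hjS).le)
    calc (Finset.univ.filter fun j => ⟪w istar, h_m⟫ < ⟪w j, h_m⟫).card
        ≤ (Sv.erase istar).card := Finset.card_le_card hsub
      _ = K - 1 := by rw [Finset.card_erase_of_mem histar, hScard]
  · intro T hTcard hTtop
    by_contra hiT
    by_cases hTS : T ⊆ Sv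
    · have : T = Sv := Finset.eq_of_subset_of_card_le hTS (by rw [hTcard, hScard])
      exact hiT (this ▸ histar)
    · obtain ⟨t, htT, htS⟩ := Finset.not_subset.1 hTS
      have h1 := L t htS
      have h2 := hTtop t htT istar hiT
      linarith
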